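/- arXiv:2003.04433 — 2 statements merged into one kernel-verified Lean document; each statement's English description precedes it below -/
import Mathlib

section
/- (Secondary characterization, quasiconvex-decreasing case.) Let X₁,…,Xₙ ∈ ℝ^d and Q := {(ψ(X₁),…,ψ(Xₙ)) : ψ quasiconvex and decreasing}. Then z ∈ Q if and only if there exist vectors ξ₁,…,ξₙ ∈ ℝ^d with ξ_j ≥ 0 coordinatewise for all j, such that ξ_jᵀ(X_i − X_j) > 0 whenever z_i < z_j. -/
open Finset MeasureTheory

/-- Upper orthant of a set `A ⊆ ℝ^d`. -/
def UpOrth {d : ℕ} (A : Set (Fin d → ℝ)) : Set (Fin d → ℝ) :=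
  {y | ∃ x ∈ A, x ≤ y}

/-- Upper orthant of the convex hull. -/
def CvDag {d : ℕ} (A : Set (Fin d → ℝ)) : Set (Fin d → ℝ) :=
  UpOrth (convexHull ℝ A)

/-- Quasiconvexity: all lower level sets are convex. -/
def QConv {d : ℕ} (ψ : (Fin d → ℝ) → ℝ) : Prop :=
  ∀ α : ℝ, Convex ℝ {x : Fin d → ℝ | ψ x ≤ α}

/-- Coordinatewise decreasing. -/
def Decr {d : ℕ} (ψ : (Fin d → ℝ) → ℝ) : Prop :=
  ∀ x y : Fin d → ℝ, x ≤ y → ψ y ≤ ψ x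

open Pointwise

section aux
variable {d : ℕ}

lemma cvDag_mono {A B : Set (Fin d → ℝ)} (h : A ⊆ B) : CvDag A ⊆ CvDag B :=
  fun _y ⟨x, hx, hxy⟩ => ⟨x, convexHull_mono h hx, hxy⟩

lemma mem_cvDag_self {A : Set (Fin d → ℝ)} {x} (hx : x ∈ A) : x ∈ CvDag A :=
  ⟨x, subset_convexHull ℝ A hx, le_refl x⟩

lemma cvDag_upward {A : Set (Fin d → ℝ)} {x y} (hx : x ∈ CvDag A) (hxy : x ≤ y) :
    y ∈ CvDag A := by
  obtain ⟨w, hw, hwx⟩ := hx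
  exact ⟨w, hw, le_trans hwx hxy⟩

lemma cvDag_convex (A : Set (Fin d → ℝ)) : Convex ℝ (CvDag A) := by
  rintro x ⟨x', hx', hx'le⟩ y ⟨y', hy', hy'le⟩ a b ha hb hab
  refine ⟨a • x' + b • y', (convex_convexHull ℝ A) hx' hy' ha hb hab, fun k => ?_⟩
  simp only [Pi.add_apply, Pi.smul_apply, smul_eq_mul]
  exact add_le_add (mul_le_mul_of_nonneg_left (hx'le k) ha)
    (mul_le_mul_of_nonneg_left (hy'le k) hb)

lemma cvDag_closed {A : Set (Fin d → ℝ)} (hA : A.Finite) : IsClosed (CvDag A) := by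
  have h1 : IsClosed {t : Fin d → ℝ | 0 ≤ t} := by
    have he : {t : Fin d → ℝ | 0 ≤ t} = ⋂ k, {t : Fin d → ℝ | 0 ≤ t k} := by
      ext t; simp [Pi.le_def, Set.mem_iInter]
    rw [he]
    exact isClosed_iInter fun k => isClosed_le continuous_const (continuous_apply k)
  have h2 : IsCompact (convexHull ℝ A) := hA.isCompact_convexHull (𝕜 := ℝ)
  have h3 := h1.vadd_right_of_isCompact h2
  have he : CvDag A = {t : Fin d → ℝ | 0 ≤ t} +ᵥ convexHull ℝ A := by
    ext y
    constructor
    · rintro ⟨x, hx, hxy⟩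
      refine Set.mem_vadd.2 ⟨y - x, ?_, x, hx, by funext m; simp [vadd_eq_add]⟩
      intro k; simp [sub_nonneg]; exact hxy k
    · intro hy
      obtain ⟨t, ht, x, hx, rfl⟩ := Set.mem_vadd.1 hy
      refine ⟨x, hx, fun k => ?_⟩
      simp only [vadd_eq_add, Pi.add_apply]
      have h0 : (0 : ℝ) ≤ t k := ht k
      linarith
  rw [he]; exact h3

lemma clm_apply_eq_sum (f : (Fin d → ℝ) →L[ℝ] ℝ) (y : Fin d → ℝ) :
    f y = ∑ k, y k * f (Pi.single k 1) := by
  have hy : y = ∑ k, y k • (Pi.single k 1 : Fin d → ℝ) := by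
    funext m
    simp [Finset.sum_apply, Pi.single_apply]
  conv_lhs => rw [hy]
  rw [map_sum]
  simp [smul_eq_mul]

end aux

theorem stmt_8 (d n : ℕ) (X : Fin n → (Fin d → ℝ)) (z : Fin n → ℝ) :
    (∃ ψ : (Fin d → ℝ) → ℝ, QConv ψ ∧ Decr ψ ∧ ∀ i, z i = ψ (X i)) ↔
    (∃ ξ : Fin n → (Fin d → ℝ), (∀ j, 0 ≤ ξ j) ∧
      ∀ i j, z i < z j → 0 < ∑ k, ξ j k * (X i k - X j k)) := by
  classical
  constructor
  · rintro ⟨ψ, hq, hdec, hz⟩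
    have key : ∀ j, ∃ ξj : Fin d → ℝ, 0 ≤ ξj ∧
        ∀ i, z i < z j → 0 < ∑ k, ξj k * (X i k - X j k) := by
      intro j
      by_cases hA : ∃ i, z i < z j
      · obtain ⟨i0, hi0⟩ := hA
        set A : Set (Fin d → ℝ) := X '' {i | z i < z j} with hAdef
        have hAfin : A.Finite := Set.Finite.image X (Set.toFinite _)
        have hnot : X j ∉ CvDag A := by
          rintro ⟨x, hx, hxle⟩
          have hconv : Convex ℝ {w : Fin d → ℝ | ψ w < z j} := by
            intro p hp q hq' a b ha hb hab
            have h1 : p ∈ {x : Fin d → ℝ | ψ x ≤ max (ψ p) (ψ q)} :=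
              Set.mem_setOf_eq ▸ le_max_left (ψ p) (ψ q)
            have h2 : q ∈ {x : Fin d → ℝ | ψ x ≤ max (ψ p) (ψ q)} :=
              Set.mem_setOf_eq ▸ le_max_right (ψ p) (ψ q)
            have h3 := hq (max (ψ p) (ψ q)) h1 h2 ha hb hab
            have h4 : max (ψ p) (ψ q) < z j := max_lt hp hq'
            exact lt_of_le_of_lt h3 h4
          have hsub : convexHull ℝ A ⊆ {w : Fin d → ℝ | ψ w < z j} := by
            apply convexHull_min _ hconv
            rintro w ⟨i, hi, rfl⟩
            simpa [← hz i] using hi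
          have h1 : ψ x < z j := hsub hx
          have h2 : ψ (X j) ≤ ψ x := hdec x (X j) hxle
          rw [← hz j] at h2
          linarith
        obtain ⟨f, u, hfu, hub⟩ :=
          geometric_hahn_banach_point_closed (cvDag_convex A) (cvDag_closed hAfin) hnot
        have hXi0 : X i0 ∈ CvDag A := mem_cvDag_self ⟨i0, Set.mem_setOf_eq ▸ hi0, rfl⟩
        refine ⟨fun k => f (Pi.single k 1), ?_, ?_⟩
        · intro k
          show (0 : ℝ) ≤ f (Pi.single k 1)
          by_contra hneg
          push_neg at hneg
          set c : ℝ := f (Pi.single k 1) with hc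
          have hfi0 : u < f (X i0) := hub _ hXi0
          set t : ℝ := (f (X i0) - u) / (-c) with ht
          have htnn : 0 ≤ t := div_nonneg (by linarith) (by linarith)
          have hmem : X i0 + t • (Pi.single k 1 : Fin d → ℝ) ∈ CvDag A := by
            apply cvDag_upward hXi0
            intro m
            simp only [Pi.add_apply, Pi.smul_apply, smul_eq_mul]
            have : 0 ≤ t * (Pi.single k 1 : Fin d → ℝ) m := by
              apply mul_nonneg htnn
              by_cases hm : k = m <;> simp [Pi.single_apply, hm]
            linarith
          have h5 := hub _ hmem
          rw [map_add, f.map_smul, smul_eq_mul, ← hc] at h5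
          have hcne : c ≠ 0 := ne_of_lt hneg
          have htc : t * c = -(f (X i0) - u) := by
            rw [ht, div_mul_eq_mul_div, mul_div_assoc, div_neg, div_self hcne]
            ring
          rw [htc] at h5
          linarith
        · intro i hi
          have hXi : X i ∈ CvDag A := mem_cvDag_self ⟨i, Set.mem_setOf_eq ▸ hi, rfl⟩
          have h6 : u < f (X i) := hub _ hXi
          have h7 : ∑ k, f (Pi.single k 1) * (X i k - X j k) = f (X i) - f (X j) := by
            rw [clm_apply_eq_sum f (X i), clm_apply_eq_sum f (X j), ← Finset.sum_sub_distrib]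
            exact Finset.sum_congr rfl fun k _ => by ring
          calc (0 : ℝ) < f (X i) - f (X j) := by linarith
            _ = _ := h7.symm
      · push_neg at hA
        exact ⟨0, le_refl 0, fun i hi => absurd hi (not_lt.2 (hA i))⟩
    choose ξ h1 h2 using key
    exact ⟨ξ, h1, fun i j hij => h2 j i hij⟩
  · rintro ⟨ξ, hpos, hsep⟩
    rcases Nat.eq_zero_or_pos n with hn | hn
    · subst hn
      refine ⟨fun _ => 0, ?_, fun x y _ => le_refl _, fun i => i.elim0⟩
      intro α
      by_cases h : (0 : ℝ) ≤ α
      · have : {x : Fin d → ℝ | (0 : ℝ) ≤ α} = Set.univ := by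
          ext x; simp [h]
        rw [this]; exact convex_univ
      · have : {x : Fin d → ℝ | (0 : ℝ) ≤ α} = ∅ := by
          ext x; simp [h]
        rw [this]; exact convex_empty
    · haveI : Nonempty (Fin n) := ⟨⟨0, hn⟩⟩
      set D : Fin n → Set (Fin d → ℝ) := fun j => CvDag (X '' {k | z k ≤ z j}) with hD
      set B : ℝ := Finset.univ.sup' Finset.univ_nonempty z with hB
      set T : (Fin d → ℝ) → Finset ℝ :=
        fun x => insert B ((Finset.univ.filter (fun j => x ∈ D j)).image z) with hT
      have hTne : ∀ x, (T x).Nonempty := fun x => Finset.insert_nonempty _ _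
      have hBz : ∀ i, z i ≤ B := fun i => Finset.le_sup' z (Finset.mem_univ i)
      have hmemD : ∀ i, X i ∈ D i := fun i => mem_cvDag_self ⟨i, Set.mem_setOf_eq ▸ le_refl (z i), rfl⟩
      have hDmono : ∀ {j j'}, z j ≤ z j' → D j ⊆ D j' := by
        intro j j' hjj'
        apply cvDag_mono
        exact Set.image_mono fun k hk => le_trans hk hjj'
      have key2 : ∀ i j, X i ∈ D j → z i ≤ z j := by
        intro i j hij
        by_contra hgt
        push_neg at hgt
        obtain ⟨y, hy, hyle⟩ := hij
        have hlin : IsLinearMap ℝ (fun x : Fin d → ℝ => ∑ k, ξ i k * x k) := by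
          constructor
          · intro p q
            rw [← Finset.sum_add_distrib]
            exact Finset.sum_congr rfl fun k _ => by simp [mul_add]
          · intro c p
            rw [smul_eq_mul, Finset.mul_sum]
            exact Finset.sum_congr rfl fun k _ => by simp [smul_eq_mul]; ring
        have hhalf : Convex ℝ {w : Fin d → ℝ | (∑ k, ξ i k * X i k) < ∑ k, ξ i k * w k} :=
          convex_halfSpace_gt hlin _
        have hsub : convexHull ℝ (X '' {k | z k ≤ z j}) ⊆
            {w : Fin d → ℝ | (∑ k, ξ i k * X i k) < ∑ k, ξ i k * w k} := by
          apply convexHull_min _ hhalf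
          rintro w ⟨m, hm, rfl⟩
          have h8 := hsep m i (lt_of_le_of_lt hm hgt)
          have h9 : ∑ k, ξ i k * (X m k - X i k)
              = (∑ k, ξ i k * X m k) - ∑ k, ξ i k * X i k := by
            rw [← Finset.sum_sub_distrib]
            exact Finset.sum_congr rfl fun k _ => by ring
          rw [h9] at h8
          show (∑ k, ξ i k * X i k) < ∑ k, ξ i k * X m k
          linarith
        have h1 : (∑ k, ξ i k * X i k) < ∑ k, ξ i k * y k := hsub hy
        have h2 : (∑ k, ξ i k * y k) ≤ ∑ k, ξ i k * X i k :=
          Finset.sum_le_sum fun k _ => mul_le_mul_of_nonneg_left (hyle k) (hpos i k)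
        linarith
      refine ⟨fun x => (T x).min' (hTne x), ?_, ?_, ?_⟩
      · -- QConv
        intro α
        by_cases hBα : B ≤ α
        · intro p hp q hq a b ha hb hab
          show (T (a • p + b • q)).min' _ ≤ α
          exact le_trans (Finset.min'_le _ B (Finset.mem_insert_self _ _)) hBα
        · push_neg at hBα
          by_cases hJ : ∃ j, z j ≤ α
          · have hJne : ((Finset.univ.filter fun j => z j ≤ α) : Finset (Fin n)).Nonempty := by
              obtain ⟨j, hj⟩ := hJ
              exact ⟨j, Finset.mem_filter.2 ⟨Finset.mem_univ j, hj⟩⟩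
            obtain ⟨j0, hj0, hmax⟩ :=
              Finset.exists_max_image (Finset.univ.filter fun j => z j ≤ α) z hJne
            have hj0α : z j0 ≤ α := (Finset.mem_filter.1 hj0).2
            have hset : {x : Fin d → ℝ | (T x).min' (hTne x) ≤ α} = D j0 := by
              ext x
              constructor
              · intro hx
                have hmem := Finset.min'_mem (T x) (hTne x)
                rcases Finset.mem_insert.1 hmem with h | h
                · exact absurd (h ▸ hx) (not_le.2 hBα)
                · obtain ⟨j, hjf, hjz⟩ := Finset.mem_image.1 h
                  have hxj : x ∈ D j := (Finset.mem_filter.1 hjf).2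
                  have hzjα : z j ≤ α := by rw [hjz]; exact hx
                  have : z j ≤ z j0 :=
                    hmax j (Finset.mem_filter.2 ⟨Finset.mem_univ j, hzjα⟩)
                  exact hDmono this hxj
              · intro hx
                have hmem : z j0 ∈ T x := Finset.mem_insert.2 (Or.inr
                  (Finset.mem_image.2 ⟨j0, Finset.mem_filter.2 ⟨Finset.mem_univ _, hx⟩, rfl⟩))
                exact le_trans (Finset.min'_le _ _ hmem) hj0α
            have : {x : Fin d → ℝ | (fun x => (T x).min' (hTne x)) x ≤ α} = D j0 := hset
            rw [this]
            exact cvDag_convex _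
          · push_neg at hJ
            have hset : {x : Fin d → ℝ | (fun x => (T x).min' (hTne x)) x ≤ α} = ∅ := by
              ext x
              simp only [Set.mem_setOf_eq, Set.mem_empty_iff_false, iff_false, not_le]
              have hmem := Finset.min'_mem (T x) (hTne x)
              rcases Finset.mem_insert.1 hmem with h | h
              · rw [h]; exact hBα
              · obtain ⟨j, _, hjz⟩ := Finset.mem_image.1 h
                rw [← hjz]; exact hJ j
            rw [hset]
            exact convex_empty
      · -- Decr
        intro x y hxy
        apply Finset.min'_subset
        apply Finset.insert_subset_insert
        apply Finset.image_subset_image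
        apply Finset.monotone_filter_right
        intro j _ hj
        exact cvDag_upward hj hxy
      · -- values
        intro i
        have hle : (T (X i)).min' (hTne _) ≤ z i := by
          apply Finset.min'_le
          exact Finset.mem_insert.2 (Or.inr (Finset.mem_image.2
            ⟨i, Finset.mem_filter.2 ⟨Finset.mem_univ _, hmemD i⟩, rfl⟩))
        have hge : z i ≤ (T (X i)).min' (hTne _) := by
          apply Finset.le_min'
          intro y hy
          rcases Finset.mem_insert.1 hy with h | h
          · rw [h]; exact hBz i
          · obtain ⟨j, hjf, rfl⟩ := Finset.mem_image.1 h
            exact key2 i j (Finset.mem_filter.1 hjf).2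
        exact (le_antisymm hle hge).symm
end

section
/- The set Q of restrictions of quasiconvex decreasing functions to n design points is a closed subset of ℝⁿ, hence for any Y ∈ ℝⁿ the minimization of z ↦ Σ_{k=1}^n (Y_k − z_k)² over Q attains its infimum at some point of Q. -/
open Finset MeasureTheory

lemma upOrth_convex {d : ℕ} {B : Set (Fin d → ℝ)} (hB : Convex ℝ B) :
    Convex ℝ (UpOrth B) := by
  rintro y₁ ⟨x₁, hx₁, h₁⟩ y₂ ⟨x₂, hx₂, h₂⟩ a b ha hb hab
  refine ⟨a • x₁ + b • x₂, hB hx₁ hx₂ ha hb hab, fun k => ?_⟩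
  have := add_le_add (mul_le_mul_of_nonneg_left (h₁ k) ha)
    (mul_le_mul_of_nonneg_left (h₂ k) hb)
  simpa using this

lemma upOrth_up {d : ℕ} {A : Set (Fin d → ℝ)} {x y : Fin d → ℝ}
    (hx : x ∈ UpOrth A) (hxy : x ≤ y) : y ∈ UpOrth A := by
  obtain ⟨p, hp, hpx⟩ := hx
  exact ⟨p, hp, le_trans hpx hxy⟩

lemma cvdag_mono {d : ℕ} {A B : Set (Fin d → ℝ)} (h : A ⊆ B) : CvDag A ⊆ CvDag B := by
  rintro x ⟨p, hp, hpx⟩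
  exact ⟨p, convexHull_mono h hp, hpx⟩

lemma nonempty_of_mem_cvdag {d : ℕ} {A : Set (Fin d → ℝ)} {x : Fin d → ℝ}
    (h : x ∈ CvDag A) : A.Nonempty := by
  obtain ⟨p, hp, _⟩ := h
  exact convexHull_nonempty_iff.1 ⟨p, hp⟩

lemma S_nonempty_of_mem {d n : ℕ} {X : Fin n → (Fin d → ℝ)} {S : Finset (Fin n)}
    {x : Fin d → ℝ} (h : x ∈ CvDag (X '' ↑S)) : S.Nonempty := by
  obtain ⟨q, j, hj, rfl⟩ := nonempty_of_mem_cvdag h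
  exact ⟨j, hj⟩

open Classical in
noncomputable def cands {d n : ℕ} (X : Fin n → (Fin d → ℝ)) (x : Fin d → ℝ) :
    Finset (Finset (Fin n)) :=
  Finset.univ.filter (fun S => x ∈ CvDag (X '' ↑S))

open Classical in
noncomputable def sval {n : ℕ} (z : Fin n → ℝ) (S : Finset (Fin n)) : ℝ :=
  if hS : S.Nonempty then S.sup' hS z else 0

open Classical in
noncomputable def psi {d n : ℕ} (X : Fin n → (Fin d → ℝ)) (z : Fin n → ℝ)
    (x : Fin d → ℝ) : ℝ :=
  if h : (cands X x).Nonempty then (cands X x).inf' h (sval z)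
  else if hn : (Finset.univ : Finset (Fin n)).Nonempty then Finset.univ.sup' hn z else 0

lemma mem_cands {d n : ℕ} {X : Fin n → (Fin d → ℝ)} {x : Fin d → ℝ} {S : Finset (Fin n)} :
    S ∈ cands X x ↔ x ∈ CvDag (X '' ↑S) := by
  classical
  simp [cands]

lemma psi_pos {d n : ℕ} (X : Fin n → (Fin d → ℝ)) (z : Fin n → ℝ) {x : Fin d → ℝ}
    (h : (cands X x).Nonempty) : psi X z x = (cands X x).inf' h (sval z) := by
  rw [psi, dif_pos h]

lemma psi_neg {d n : ℕ} (X : Fin n → (Fin d → ℝ)) (z : Fin n → ℝ) {x : Fin d → ℝ}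
    (h : ¬ (cands X x).Nonempty) (hn : (Finset.univ : Finset (Fin n)).Nonempty) :
    psi X z x = Finset.univ.sup' hn z := by
  rw [psi, dif_neg h, dif_pos hn]

section withn
variable {d n : ℕ} (X : Fin n → (Fin d → ℝ)) (z : Fin n → ℝ)

lemma psi_le_M (hn : (Finset.univ : Finset (Fin n)).Nonempty) (x : Fin d → ℝ) :
    psi X z x ≤ Finset.univ.sup' hn z := by
  classical
  by_cases h : (cands X x).Nonempty
  · obtain ⟨S, hS⟩ := h
    have hSne : S.Nonempty := S_nonempty_of_mem (mem_cands.1 hS)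
    have h1 : psi X z x ≤ sval z S := by
      rw [psi_pos X z ⟨S, hS⟩]
      exact Finset.inf'_le _ hS
    have h2 : sval z S ≤ Finset.univ.sup' hn z := by
      rw [sval, dif_pos hSne]
      exact Finset.sup'_mono z (Finset.subset_univ S) hSne
    exact le_trans h1 h2
  · rw [psi_neg X z h hn]

lemma psi_decr (hn : (Finset.univ : Finset (Fin n)).Nonempty) : Decr (psi X z) := by
  classical
  intro x y hxy
  have hsub : cands X x ⊆ cands X y := by
    intro S hS
    exact mem_cands.2 (upOrth_up (mem_cands.1 hS) hxy)
  by_cases h : (cands X x).Nonempty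
  · obtain ⟨S, hS, hval⟩ := Finset.exists_mem_eq_inf' h (sval z)
    have h2 : psi X z y ≤ sval z S := by
      rw [psi_pos X z (h.mono hsub)]
      exact Finset.inf'_le _ (hsub hS)
    rw [psi_pos X z h, hval]
    exact h2
  · rw [psi_neg X z h hn]
    exact psi_le_M X z hn y

lemma psi_qconv (hn : (Finset.univ : Finset (Fin n)).Nonempty) : QConv (psi X z) := by
  classical
  intro α
  by_cases hα : Finset.univ.sup' hn z ≤ α
  · have : {x : Fin d → ℝ | psi X z x ≤ α} = Set.univ :=
      Set.eq_univ_of_forall fun x => le_trans (psi_le_M X z hn x) hα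
    rw [this]; exact convex_univ
  · set T : Finset (Fin n) := Finset.univ.filter (fun j => z j ≤ α) with hT
    have hset : {x : Fin d → ℝ | psi X z x ≤ α} = CvDag (X '' ↑T) := by
      ext x
      constructor
      · intro hx
        have hc : (cands X x).Nonempty := by
          by_contra hc
          rw [Set.mem_setOf_eq, psi_neg X z hc hn] at hx
          exact hα hx
        obtain ⟨S, hS, hval⟩ := Finset.exists_mem_eq_inf' hc (sval z)
        have hSne : S.Nonempty := S_nonempty_of_mem (mem_cands.1 hS)
        have hle : sval z S ≤ α := by
          rw [Set.mem_setOf_eq, psi_pos X z hc, hval] at hx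
          exact hx
        rw [sval, dif_pos hSne, Finset.sup'_le_iff] at hle
        have hsub : (X '' ↑S : Set (Fin d → ℝ)) ⊆ X '' ↑T := by
          apply Set.image_mono
          intro j hj
          simp only [hT, Finset.coe_filter, Set.mem_setOf_eq]
          exact ⟨Finset.mem_univ j, hle j hj⟩
        exact cvdag_mono hsub (mem_cands.1 hS)
      · intro hx
        have hTne : T.Nonempty := S_nonempty_of_mem hx
        have hmem : T ∈ cands X x := mem_cands.2 hx
        rw [Set.mem_setOf_eq, psi_pos X z ⟨T, hmem⟩]
        refine le_trans (Finset.inf'_le _ hmem) ?_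
        rw [sval, dif_pos hTne]
        apply Finset.sup'_le
        intro j hj
        simp only [hT, Finset.mem_filter] at hj
        exact hj.2
    rw [hset]
    exact upOrth_convex (convex_convexHull ℝ _)

lemma psi_at_X
    (hP : ∀ (S : Finset (Fin n)) i, X i ∈ CvDag (X '' ↑S) → ∃ j ∈ S, z i ≤ z j)
    (i : Fin n) : psi X z (X i) = z i := by
  classical
  have hsingle : X i ∈ CvDag (X '' ↑({i} : Finset (Fin n))) :=
    ⟨X i, subset_convexHull ℝ _ ⟨i, by simp, rfl⟩, le_refl _⟩
  have hmem : ({i} : Finset (Fin n)) ∈ cands X (X i) := mem_cands.2 hsingle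
  have hc : (cands X (X i)).Nonempty := ⟨_, hmem⟩
  apply le_antisymm
  · rw [psi_pos X z hc]
    refine le_trans (Finset.inf'_le _ hmem) ?_
    rw [sval, dif_pos (Finset.singleton_nonempty i)]
    simp
  · obtain ⟨S, hS, hval⟩ := Finset.exists_mem_eq_inf' hc (sval z)
    have hSne : S.Nonempty := S_nonempty_of_mem (mem_cands.1 hS)
    obtain ⟨j, hj, hzij⟩ := hP S i (mem_cands.1 hS)
    rw [psi_pos X z hc, hval, sval, dif_pos hSne]
    exact le_trans hzij (Finset.le_sup' z hj)

end withn

lemma qd_to_char {d n : ℕ} (X : Fin n → (Fin d → ℝ)) (ψ : (Fin d → ℝ) → ℝ)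
    (hq : QConv ψ) (hd : Decr ψ) (S : Finset (Fin n)) (i : Fin n)
    (h : X i ∈ CvDag (X '' ↑S)) : ∃ j ∈ S, ψ (X i) ≤ ψ (X j) := by
  have hSne : S.Nonempty := S_nonempty_of_mem h
  obtain ⟨p, hp, hpx⟩ := h
  set α := S.sup' hSne (fun j => ψ (X j)) with hα
  have hsub : convexHull ℝ (X '' ↑S) ⊆ {x | ψ x ≤ α} := by
    apply convexHull_min _ (hq α)
    rintro q ⟨j, hj, rfl⟩
    exact Finset.le_sup' (fun j => ψ (X j)) hj
  have h1 : ψ (X i) ≤ α := le_trans (hd p (X i) hpx) (hsub hp)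
  obtain ⟨j, hj, hval⟩ := Finset.exists_mem_eq_sup' hSne (fun j => ψ (X j))
  exact ⟨j, hj, h1.trans_eq (hα.trans hval)⟩


lemma char_eq {d n : ℕ} (X : Fin n → (Fin d → ℝ)) :
    {z : Fin n → ℝ | ∃ ψ : (Fin d → ℝ) → ℝ, QConv ψ ∧ Decr ψ ∧ ∀ i, z i = ψ (X i)} =
    {z : Fin n → ℝ |
      ∀ (S : Finset (Fin n)) (i : Fin n), X i ∈ CvDag (X '' ↑S) → ∃ j ∈ S, z i ≤ z j} := by
  ext z
  constructor
  · rintro ⟨ψ, hq, hd, hz⟩ S i hX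
    obtain ⟨j, hj, hle⟩ := qd_to_char X ψ hq hd S i hX
    exact ⟨j, hj, by rw [hz i, hz j]; exact hle⟩
  · intro hP
    rcases isEmpty_or_nonempty (Fin n) with he | hne
    · refine ⟨fun _ => 0, ?_, fun x y _ => le_refl _, fun i => (he.false i).elim⟩
      intro α
      by_cases h : (0:ℝ) ≤ α
      · have h2 : {x : Fin d → ℝ | (0:ℝ) ≤ α} = Set.univ := Set.eq_univ_of_forall fun _ => h
        rw [h2]; exact convex_univ
      · have h2 : {x : Fin d → ℝ | (0:ℝ) ≤ α} = ∅ := by ext x; simp [h]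
        rw [h2]; exact convex_empty
    · have hn : (Finset.univ : Finset (Fin n)).Nonempty := Finset.univ_nonempty
      exact ⟨psi X z, psi_qconv X z hn, psi_decr X z hn,
        fun i => (psi_at_X X z hP i).symm⟩

lemma char_closed {d n : ℕ} (X : Fin n → (Fin d → ℝ)) :
    IsClosed {z : Fin n → ℝ |
      ∀ (S : Finset (Fin n)) (i : Fin n), X i ∈ CvDag (X '' ↑S) → ∃ j ∈ S, z i ≤ z j} := by
  have heq : {z : Fin n → ℝ |
      ∀ (S : Finset (Fin n)) (i : Fin n), X i ∈ CvDag (X '' ↑S) → ∃ j ∈ S, z i ≤ z j} =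
      ⋂ (S : Finset (Fin n)), ⋂ (i : Fin n),
        {z : Fin n → ℝ | X i ∈ CvDag (X '' ↑S) → ∃ j ∈ S, z i ≤ z j} := by
    ext z; simp [Set.mem_iInter]
  rw [heq]
  refine isClosed_iInter fun S => isClosed_iInter fun i => ?_
  by_cases h : X i ∈ CvDag (X '' ↑S)
  · have h2 : {z : Fin n → ℝ | X i ∈ CvDag (X '' ↑S) → ∃ j ∈ S, z i ≤ z j} =
        ⋃ j ∈ S, {z : Fin n → ℝ | z i ≤ z j} := by
      ext z; simp [h]
    rw [h2]
    exact Set.Finite.isClosed_biUnion S.finite_toSet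
      fun j _ => isClosed_le (continuous_apply i) (continuous_apply j)
  · have h2 : {z : Fin n → ℝ | X i ∈ CvDag (X '' ↑S) → ∃ j ∈ S, z i ≤ z j} = Set.univ := by
      ext z; simp [h]
    rw [h2]; exact isClosed_univ

theorem stmt_10 (d n : ℕ) (X : Fin n → (Fin d → ℝ)) :
    IsClosed {z : Fin n → ℝ |
        ∃ ψ : (Fin d → ℝ) → ℝ, QConv ψ ∧ Decr ψ ∧ ∀ i, z i = ψ (X i)} ∧
    ∀ Y : Fin n → ℝ,
      ∃ z ∈ {z : Fin n → ℝ |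
          ∃ ψ : (Fin d → ℝ) → ℝ, QConv ψ ∧ Decr ψ ∧ ∀ i, z i = ψ (X i)},
        ∀ w ∈ {z : Fin n → ℝ |
            ∃ ψ : (Fin d → ℝ) → ℝ, QConv ψ ∧ Decr ψ ∧ ∀ i, z i = ψ (X i)},
          ∑ k, (Y k - z k) ^ 2 ≤ ∑ k, (Y k - w k) ^ 2 := by
  have hclosed : IsClosed {z : Fin n → ℝ |
      ∃ ψ : (Fin d → ℝ) → ℝ, QConv ψ ∧ Decr ψ ∧ ∀ i, z i = ψ (X i)} := by
    rw [char_eq X]; exact char_closed X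
  refine ⟨hclosed, fun Y => ?_⟩
  set Qs := {z : Fin n → ℝ |
      ∃ ψ : (Fin d → ℝ) → ℝ, QConv ψ ∧ Decr ψ ∧ ∀ i, z i = ψ (X i)} with hQs
  have hz₀ : (fun _ : Fin n => (0:ℝ)) ∈ Qs := by
    refine ⟨fun _ => 0, ?_, fun x y _ => le_refl _, fun i => rfl⟩
    intro α
    by_cases h : (0:ℝ) ≤ α
    · have h2 : {x : Fin d → ℝ | (0:ℝ) ≤ α} = Set.univ := Set.eq_univ_of_forall fun _ => h
      rw [h2]; exact convex_univ
    · have h2 : {x : Fin d → ℝ | (0:ℝ) ≤ α} = ∅ := by ext x; simp [h]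
      rw [h2]; exact convex_empty
  set f : (Fin n → ℝ) → ℝ := fun v => ∑ k, (Y k - v k) ^ 2 with hfdef
  have hf : Continuous f := by
    apply continuous_finset_sum
    intro k _
    exact (continuous_const.sub (continuous_apply k)).pow 2
  set z₀ : Fin n → ℝ := fun _ => 0 with hz₀def
  set c : ℝ := f z₀ with hc
  set K : Set (Fin n → ℝ) := Qs ∩ {v | f v ≤ c} with hK
  have hKclosed : IsClosed K := hclosed.inter (isClosed_le hf continuous_const)
  have hKsub : K ⊆ Metric.closedBall Y (Real.sqrt c) := by
    rintro v ⟨-, hv⟩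
    rw [Metric.mem_closedBall, dist_pi_le_iff (Real.sqrt_nonneg c)]
    intro k
    have h1 : (Y k - v k) ^ 2 ≤ c :=
      le_trans (Finset.single_le_sum (fun j _ => sq_nonneg (Y j - v j))
        (Finset.mem_univ k)) hv
    have h2 : |Y k - v k| ≤ Real.sqrt c := by
      have := Real.sqrt_le_sqrt h1
      rwa [Real.sqrt_sq_eq_abs] at this
    rw [Real.dist_eq, abs_sub_comm]
    exact h2
  have hKcompact : IsCompact K :=
    (isCompact_closedBall Y (Real.sqrt c)).of_isClosed_subset hKclosed hKsub
  have hKne : K.Nonempty := ⟨z₀, hz₀, le_refl c⟩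
  obtain ⟨z, hzK, hzmin⟩ := hKcompact.exists_isMinOn hKne hf.continuousOn
  refine ⟨z, hzK.1, fun w hw => ?_⟩
  by_cases hwc : f w ≤ c
  · exact hzmin ⟨hw, hwc⟩
  · exact le_trans (hzmin ⟨hz₀, le_refl c⟩) (le_of_not_ge hwc)
end
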